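/- Let n = k(k+1)/2 and let ρ_k = (k, k-1, ..., 2, 1) be the staircase partition of n. For 1 ≤ j ≤ n/2, the value of the irreducible S_n-character [n-j, j] on permutations of cycle type ρ_k equals d_k(j) - d_k(j-1), where d_k(m) is the number of partitions of m into distinct parts each at most k. -/

import Mathlib

/-- `dd k m` is the number of partitions of `m` into distinct parts each at most `k`. -/
def dd (k m : ℕ) : ℕ :=
  Fintype.card {p : Nat.Partition m // p.parts.Nodup ∧ ∀ i ∈ p.parts, i ≤ k}

/-- The number of `σ`-invariant subsets of `{1,…,n}` of size `m`; by the
Littlewood–Richardson rule, `[n-j,j] = [n-j]∘[j] - [n-j+1]∘[j-1]`, and the outer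
product `[n-m]∘[m]` is the permutation character on `m`-subsets, whose value at
`σ` is this count. -/
def invCount {n : ℕ} (σ : Equiv.Perm (Fin n)) (m : ℕ) : ℕ :=
  (Finset.univ.filter fun S : Finset (Fin n) => S.card = m ∧ S.image σ = S).card

namespace SaxlAux

open Equiv Equiv.Perm Finset

variable {n k : ℕ}

/-- the size of the `σ`-orbit of `x` -/
def sz (σ : Equiv.Perm (Fin n)) (x : Fin n) : ℕ :=
  if x ∈ σ.support then (σ.cycleOf x).support.card else 1

lemma sz_apply (σ : Equiv.Perm (Fin n)) (x : Fin n) : sz σ (σ x) = sz σ x := by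
  simp only [sz, Equiv.Perm.apply_mem_support, Equiv.Perm.cycleOf_self_apply]

variable {σ : Equiv.Perm (Fin n)}

lemma two_le_sz (hx : x ∈ σ.support) : 2 ≤ sz σ x := by
  simp only [sz, hx, if_true]
  exact (Equiv.Perm.isCycle_cycleOf σ (Equiv.Perm.mem_support.mp hx)).two_le_card_support

lemma sz_eq_one (hx : x ∉ σ.support) : sz σ x = 1 := by
  simp only [sz, hx, if_false]

lemma sz_mem (hct : σ.cycleType = (Finset.Icc 2 k).val) (hk : 1 ≤ k) (x : Fin n) :
    sz σ x ∈ Finset.Icc 1 k := by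
  classical
  by_cases hx : x ∈ σ.support
  · simp only [sz, hx, if_true]
    have h1 : σ.cycleOf x ∈ σ.cycleFactorsFinset :=
      Equiv.Perm.cycleOf_mem_cycleFactorsFinset_iff.mpr hx
    have h2 : (σ.cycleOf x).support.card ∈ σ.cycleType := by
      rw [Equiv.Perm.cycleType_def]
      exact Multiset.mem_map_of_mem _ h1
    rw [hct] at h2
    have := Finset.mem_Icc.mp (Finset.mem_val.mp h2)
    exact Finset.mem_Icc.mpr ⟨by omega, this.2⟩
  · rw [sz_eq_one hx]; exact Finset.mem_Icc.mpr ⟨le_refl _, hk⟩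

lemma sameCycle_of_sz_eq (hct : σ.cycleType = (Finset.Icc 2 k).val)
    (hfix : σ.supportᶜ.card = 1) {x y : Fin n} (h : sz σ x = sz σ y) :
    σ.SameCycle x y := by
  classical
  by_cases hx : x ∈ σ.support <;> by_cases hy : y ∈ σ.support
  · -- both in support: cycleOf x = cycleOf y
    have hnd : σ.cycleType.Nodup := by rw [hct]; exact (Finset.Icc 2 k).nodup
    rw [Equiv.Perm.cycleType_def] at hnd
    have hcx : σ.cycleOf x ∈ σ.cycleFactorsFinset :=
      Equiv.Perm.cycleOf_mem_cycleFactorsFinset_iff.mpr hx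
    have hcy : σ.cycleOf y ∈ σ.cycleFactorsFinset :=
      Equiv.Perm.cycleOf_mem_cycleFactorsFinset_iff.mpr hy
    have hval : (σ.cycleOf x).support.card = (σ.cycleOf y).support.card := by
      simpa only [sz, hx, hy, if_true] using h
    have heq : σ.cycleOf x = σ.cycleOf y :=
      Multiset.inj_on_of_nodup_map hnd _ hcx _ hcy hval
    have : y ∈ (σ.cycleOf x).support := by
      rw [heq]
      exact Equiv.Perm.mem_support_cycleOf_iff.mpr ⟨Equiv.Perm.SameCycle.refl _ _, hy⟩
    exact (Equiv.Perm.mem_support_cycleOf_iff.mp this).1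
  · have := two_le_sz hx; rw [h, sz_eq_one hy] at this; omega
  · have := two_le_sz hy; rw [← h, sz_eq_one hx] at this; omega
  · have hx' : x ∈ σ.supportᶜ := Finset.mem_compl.mpr hx
    have hy' : y ∈ σ.supportᶜ := Finset.mem_compl.mpr hy
    have : x = y := Finset.card_le_one.mp hfix.le x hx' y hy'
    rw [this]

lemma mem_of_sameCycle {S : Finset (Fin n)} (hS : S.image σ = S)
    {x y : Fin n} (hx : x ∈ S) (hxy : σ.SameCycle x y) : y ∈ S := by
  classical
  have hstep : ∀ z ∈ S, σ z ∈ S := by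
    intro z hz
    rw [← hS]; exact Finset.mem_image_of_mem _ hz
  have hpow : ∀ i : ℕ, (σ ^ i) x ∈ S := by
    intro i
    induction i with
    | zero => simpa using hx
    | succ i ih => rw [pow_succ']; exact hstep _ ih
  obtain ⟨i, _, hi⟩ := hxy.exists_pow_eq'
  rw [← hi]; exact hpow i

/-- fiber of `sz` over `i ∈ Icc 1 k` has cardinality `i`. -/
lemma card_fiber (hct : σ.cycleType = (Finset.Icc 2 k).val)
    (hfix : σ.supportᶜ.card = 1) {i : ℕ} (hi : i ∈ Finset.Icc 1 k) :
    (Finset.univ.filter fun x : Fin n => sz σ x = i).card = i := by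
  classical
  rcases Finset.mem_Icc.mp hi with ⟨hi1, hik⟩
  rcases Nat.lt_or_ge i 2 with h2 | h2
  · -- i = 1
    have hi' : i = 1 := by omega
    subst hi'
    have : (Finset.univ.filter fun x : Fin n => sz σ x = 1) = σ.supportᶜ := by
      ext x
      simp only [Finset.mem_filter, Finset.mem_univ, true_and, Finset.mem_compl]
      constructor
      · intro h hx; have := two_le_sz hx; omega
      · intro h; exact sz_eq_one h
    rw [this, hfix]
  · -- i ≥ 2 : there is a unique cycle of support size i
    have hmem : i ∈ σ.cycleType := by
      rw [hct]; exact Finset.mem_Icc.mpr ⟨h2, hik⟩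
    rw [Equiv.Perm.cycleType_def] at hmem
    obtain ⟨c, hc, hci⟩ := Multiset.mem_map.mp hmem
    have hnd : σ.cycleType.Nodup := by rw [hct]; exact (Finset.Icc 2 k).nodup
    rw [Equiv.Perm.cycleType_def] at hnd
    have : (Finset.univ.filter fun x : Fin n => sz σ x = i) = c.support := by
      ext x
      simp only [Finset.mem_filter, Finset.mem_univ, true_and]
      constructor
      · intro h
        have hx : x ∈ σ.support := by
          by_contra hx
          rw [sz_eq_one hx] at h; omega
        have hcx : σ.cycleOf x ∈ σ.cycleFactorsFinset :=
          Equiv.Perm.cycleOf_mem_cycleFactorsFinset_iff.mpr hx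
        have hval : (σ.cycleOf x).support.card = (Finset.card ∘ Equiv.Perm.support) c := by
          rw [hci]; simpa only [sz, hx, if_true] using h
        have heq : σ.cycleOf x = c := Multiset.inj_on_of_nodup_map hnd _ hcx _ hc hval
        rw [← heq]
        exact Equiv.Perm.mem_support_cycleOf_iff.mpr ⟨Equiv.Perm.SameCycle.refl _ _, hx⟩
      · intro hxc
        have hceq : c = σ.cycleOf x := Equiv.Perm.cycle_is_cycleOf hxc hc
        have hx : x ∈ σ.support :=
          (Equiv.Perm.mem_support_cycleOf_iff.mp (hceq ▸ hxc)).2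
        simp only [sz, hx, if_true]
        rw [← hceq]; exact hci
    rw [this, ← hci]; rfl

/-- for `A ⊆ Icc 1 k`, the set of points whose orbit size lies in `A` has
cardinality `∑ i in A, i`. -/
lemma card_szSet (hct : σ.cycleType = (Finset.Icc 2 k).val)
    (hfix : σ.supportᶜ.card = 1) {A : Finset ℕ} (hA : A ⊆ Finset.Icc 1 k) :
    (Finset.univ.filter fun x : Fin n => sz σ x ∈ A).card = A.sum id := by
  classical
  have hsplit : (Finset.univ.filter fun x : Fin n => sz σ x ∈ A)
      = A.biUnion fun i => Finset.univ.filter fun x : Fin n => sz σ x = i := by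
    ext x
    simp only [Finset.mem_filter, Finset.mem_univ, true_and, Finset.mem_biUnion]
    constructor
    · intro h; exact ⟨sz σ x, h, rfl⟩
    · rintro ⟨i, hi, rfl⟩; exact hi
  rw [hsplit, Finset.card_biUnion]
  · exact Finset.sum_congr rfl fun i hi => card_fiber hct hfix (hA hi)
  · intro i _ j _ hij
    simp only [Finset.disjoint_filter]
    rintro x _ rfl h
    exact hij h

lemma invCount_eq (hct : σ.cycleType = (Finset.Icc 2 k).val)
    (hfix : σ.supportᶜ.card = 1) (hk : 1 ≤ k) (m : ℕ) :
    invCount σ m = ((Finset.Icc 1 k).powerset.filter fun A => A.sum id = m).card := by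
  classical
  rw [invCount]
  refine Finset.card_bij' (fun S _ => S.image (sz σ))
    (fun A _ => Finset.univ.filter fun x : Fin n => sz σ x ∈ A) ?_ ?_ ?_ ?_
  · -- forward maps into target
    intro S hS
    simp only [Finset.mem_filter, Finset.mem_univ, true_and] at hS
    obtain ⟨hcard, hinv⟩ := hS
    have hsub : S.image (sz σ) ⊆ Finset.Icc 1 k := by
      intro i hi
      obtain ⟨x, _, rfl⟩ := Finset.mem_image.mp hi
      exact sz_mem hct hk x
    have hback : (Finset.univ.filter fun x : Fin n => sz σ x ∈ S.image (sz σ)) = S := by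
      apply Finset.Subset.antisymm
      · intro x hx
        rw [Finset.mem_filter] at hx
        obtain ⟨y, hy, hyx⟩ := Finset.mem_image.mp hx.2
        exact mem_of_sameCycle hinv hy (sameCycle_of_sz_eq hct hfix hyx)
      · intro x hx
        rw [Finset.mem_filter]
        exact ⟨Finset.mem_univ _, Finset.mem_image_of_mem _ hx⟩
    rw [Finset.mem_filter, Finset.mem_powerset]
    refine ⟨hsub, ?_⟩
    rw [← card_szSet hct hfix hsub, hback, hcard]
  · -- backward maps into source
    intro A hA
    rw [Finset.mem_filter, Finset.mem_powerset] at hA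
    obtain ⟨hsub, hsum⟩ := hA
    simp only [Finset.mem_filter, Finset.mem_univ, true_and]
    constructor
    · rw [card_szSet hct hfix hsub, hsum]
    · ext y
      simp only [Finset.mem_image, Finset.mem_filter, Finset.mem_univ, true_and]
      constructor
      · rintro ⟨x, hx, rfl⟩
        rw [sz_apply]; exact hx
      · intro hy
        exact ⟨σ.symm y, by rw [← sz_apply σ (σ.symm y)]; simpa using hy, by simp⟩
  · -- left inverse
    intro S hS
    simp only [Finset.mem_filter, Finset.mem_univ, true_and] at hS
    apply Finset.Subset.antisymm
    · intro x hx
      rw [Finset.mem_filter] at hx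
      obtain ⟨y, hy, hyx⟩ := Finset.mem_image.mp hx.2
      exact mem_of_sameCycle hS.2 hy (sameCycle_of_sz_eq hct hfix hyx)
    · intro x hx
      rw [Finset.mem_filter]
      exact ⟨Finset.mem_univ _, Finset.mem_image_of_mem _ hx⟩
  · -- right inverse
    intro A hA
    rw [Finset.mem_filter, Finset.mem_powerset] at hA
    apply Finset.Subset.antisymm
    · intro i hi
      obtain ⟨x, hx, rfl⟩ := Finset.mem_image.mp hi
      exact (Finset.mem_filter.mp hx).2
    · intro i hi
      have hcard : (Finset.univ.filter fun x : Fin n => sz σ x = i).card = i :=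
        card_fiber hct hfix (hA.1 hi)
    -- fiber nonempty
      have hpos : 0 < i := (Finset.mem_Icc.mp (hA.1 hi)).1
      have : (Finset.univ.filter fun x : Fin n => sz σ x = i).Nonempty := by
        rw [← Finset.card_pos, hcard]; exact hpos
      obtain ⟨x, hx⟩ := this
      rw [Finset.mem_filter] at hx
      refine Finset.mem_image.mpr ⟨x, ?_, hx.2⟩
      rw [Finset.mem_filter]
      exact ⟨Finset.mem_univ _, hx.2 ▸ hi⟩

lemma dd_eq (k m : ℕ) :
    dd k m = ((Finset.Icc 1 k).powerset.filter fun A => A.sum id = m).card := by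
  classical
  rw [dd, ← Fintype.card_coe]
  apply Fintype.card_congr
  refine
    { toFun := fun p => ⟨p.1.parts.toFinset, ?_⟩
      invFun := fun A => ⟨⟨A.1.val, ?_, ?_⟩, A.1.nodup, ?_⟩
      left_inv := ?_
      right_inv := ?_ }
  · obtain ⟨p, hnd, hle⟩ := p
    rw [Finset.mem_filter, Finset.mem_powerset]
    constructor
    · intro i hi
      rw [Multiset.mem_toFinset] at hi
      exact Finset.mem_Icc.mpr ⟨p.parts_pos hi, hle i hi⟩
    · have h2 : p.parts.toFinset.val = p.parts := Multiset.dedup_eq_self.mpr hnd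
      rw [Finset.sum_eq_multiset_sum, h2, Multiset.map_id]
      exact p.parts_sum
  · intro i hi
    have := Finset.mem_powerset.mp (Finset.mem_filter.mp A.2).1 hi
    exact (Finset.mem_Icc.mp this).1
  · have := (Finset.mem_filter.mp A.2).2
    rw [Finset.sum_eq_multiset_sum, Multiset.map_id] at this
    exact this
  · intro i hi
    have := Finset.mem_powerset.mp (Finset.mem_filter.mp A.2).1 hi
    exact (Finset.mem_Icc.mp this).2
  · rintro ⟨p, hnd, hle⟩
    apply Subtype.ext
    apply Nat.Partition.ext
    exact Multiset.dedup_eq_self.mpr hnd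
  · intro A
    apply Subtype.ext
    exact Finset.val_toFinset _

end SaxlAux

/-- For `n = k(k+1)/2` and `σ` of cycle type the staircase `ρ_k = (k,…,2,1)`,
the value `[n-j,j](ρ_k) = ([n-j]∘[j])(σ) - ([n-j+1]∘[j-1])(σ)` of the irreducible
character to the 2-part partition `(n-j,j)` equals `d_k(j) - d_k(j-1)`. -/
theorem saxl_stmt10 (k n : ℕ) (hk : 1 ≤ k) (hn : n = k * (k + 1) / 2)
    (j : ℕ) (hj1 : 1 ≤ j) (hj2 : 2 * j ≤ n)
    (σ : Equiv.Perm (Fin n)) (hσ : σ.partition.parts = (Finset.Icc 1 k).val) :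
    (invCount σ j : ℤ) - (invCount σ (j - 1) : ℤ)
      = (dd k j : ℤ) - (dd k (j - 1) : ℤ) := by
  classical
  have hct : σ.cycleType = (Finset.Icc 2 k).val := by
    rw [← Equiv.Perm.filter_parts_partition_eq_cycleType, hσ, ← Finset.filter_val]
    congr 1
    ext x
    simp only [Finset.mem_filter, Finset.mem_Icc]
    omega
  have hparts := Equiv.Perm.parts_partition (σ := σ)
  rw [hσ, hct] at hparts
  have hfix : σ.supportᶜ.card = 1 := by
    rw [Finset.card_compl]
    have hcount := congrArg (Multiset.count 1) hparts
    rw [Multiset.count_add, Multiset.count_replicate] at hcount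
    have h1 : Multiset.count 1 (Finset.Icc 1 k).val = 1 :=
      Multiset.count_eq_one_of_mem (Finset.Icc 1 k).nodup
        (by exact Finset.mem_Icc.mpr ⟨le_refl _, hk⟩)
    have h2 : Multiset.count 1 (Finset.Icc 2 k).val = 0 := by
      rw [Multiset.count_eq_zero]
      intro h
      have := (Finset.mem_Icc.mp (Finset.mem_val.mp h)).1
      omega
    rw [h1, h2] at hcount
    simp only [if_pos rfl] at hcount
    simpa using hcount.symm
  have key : ∀ m, invCount σ m = dd k m := fun m => by
    rw [SaxlAux.invCount_eq hct hfix hk m, SaxlAux.dd_eq]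
  rw [key j, key (j - 1)]
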